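/- Define T₁(η,ζ,τ) = w³/τ² + 27/4 for real η, ζ, τ with τ ≠ 0, where w = (η+i)² + (ζ+i)². Then there exist R > 0 and R' > 0 such that for all (η,ζ,τ) with τ ≠ 0 satisfying either η² + ζ² > R² or |τ| ≥ R', one has |T₁(η,ζ,τ)| ≥ 27/8. -/

import Mathlib

open Complex

lemma aux_w_eq (η ζ : ℝ) :
    (((η:ℂ)+I)^2+((ζ:ℂ)+I)^2) = (((η^2+ζ^2-2:ℝ)):ℂ) + ((2*(η+ζ):ℝ):ℂ)*I := by
  push_cast
  linear_combination (2:ℂ) * Complex.I_sq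

lemma aux_cube (a b : ℝ) :
    ((a:ℂ) + (b:ℂ)*I)^3 = ((a^3-3*a*b^2:ℝ):ℂ) + ((3*a^2*b-b^3:ℝ):ℂ)*I := by
  push_cast
  linear_combination ((3*a*b^2 : ℂ) + (b:ℂ)^3*I) * Complex.I_sq

/-- For `T₁(η,ζ,τ) = w³/τ² + 27/4` with `w = (η+i)² + (ζ+i)²`, there are
`R > 0` and `R' > 0` such that `|T₁| ≥ 27/8` whenever `η² + ζ² > R²` or `|τ| ≥ R'`. -/
theorem stmt_1 :
    ∃ R > (0 : ℝ), ∃ R' > (0 : ℝ), ∀ η ζ τ : ℝ, τ ≠ 0 →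
      (η ^ 2 + ζ ^ 2 > R ^ 2 ∨ |τ| ≥ R') →
      ‖
        ((((η : ℂ) + I) ^ 2 + ((ζ : ℂ) + I) ^ 2) ^ 3 / (τ : ℂ) ^ 2 + 27 / 4)‖
        ≥ 27 / 8 := by
  refine ⟨28, by norm_num, 786^2, by norm_num, ?_⟩
  intro η ζ τ hτ h
  have hτ2 : (0:ℝ) < τ^2 := by positivity
  by_cases hs : η ^ 2 + ζ ^ 2 > (28:ℝ) ^ 2
  · -- large η² + ζ² : the real part is at least 27/4
    set a : ℝ := η^2+ζ^2-2 with ha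
    set b : ℝ := 2*(η+ζ) with hb
    have hw : (((η:ℂ)+I)^2+((ζ:ℂ)+I)^2)^3
        = ((a^3-3*a*b^2:ℝ):ℂ) + ((3*a^2*b-b^3:ℝ):ℂ)*I := by
      rw [aux_w_eq, aux_cube]
    have htc : ((τ:ℂ))^2 = ((τ^2:ℝ):ℂ) := by push_cast; ring
    have hre : ((((η:ℂ)+I)^2+((ζ:ℂ)+I)^2)^3 / (τ:ℂ)^2 + 27/4).re
        = (a^3-3*a*b^2)/τ^2 + 27/4 := by
      rw [hw, htc, Complex.add_re, Complex.div_ofReal_re]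
      simp [← Complex.ofReal_pow]
    have hnum : 0 ≤ a^3 - 3*a*b^2 := by
      have hb2 : b^2 ≤ 8*(η^2+ζ^2) := by
        rw [hb]; nlinarith [sq_nonneg (η-ζ)]
      have ha1 : (782:ℝ) ≤ a := by rw [ha]; nlinarith
      nlinarith [sq_nonneg b, sq_nonneg a]
    have : (27:ℝ)/8 ≤ ((((η:ℂ)+I)^2+((ζ:ℂ)+I)^2)^3 / (τ:ℂ)^2 + 27/4).re := by
      rw [hre]
      have : 0 ≤ (a^3-3*a*b^2)/τ^2 := by positivity
      linarith
    calc (27:ℝ)/8 ≤ ((((η:ℂ)+I)^2+((ζ:ℂ)+I)^2)^3 / (τ:ℂ)^2 + 27/4).re := this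
      _ ≤ ‖((((η:ℂ)+I)^2+((ζ:ℂ)+I)^2)^3 / (τ:ℂ)^2 + 27/4)‖ :=
        Complex.re_le_norm _
  · -- bounded η² + ζ² and large |τ|
    have hτ' : |τ| ≥ 786^2 := by
      rcases h with h | h
      · exact absurd h hs
      · exact h
    push_neg at hs
    have habsq : ∀ x : ℝ, ‖(((x:ℂ)+I)^2)‖ = x^2 + 1 := by
      intro x
      rw [norm_pow, Complex.sq_norm]
      simp [Complex.normSq_apply]
      ring
    have hw : ‖(((η:ℂ)+I)^2+((ζ:ℂ)+I)^2)‖ ≤ 786 := by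
      calc ‖(((η:ℂ)+I)^2+((ζ:ℂ)+I)^2)‖
          ≤ ‖(((η:ℂ)+I)^2)‖ + ‖(((ζ:ℂ)+I)^2)‖ :=
            norm_add_le _ _
        _ = (η^2+1) + (ζ^2+1) := by rw [habsq, habsq]
        _ ≤ 786 := by nlinarith
    have hτ4 : (786:ℝ)^4 ≤ τ^2 := by
      have h1 : ((786:ℝ)^2)^2 ≤ |τ|^2 := pow_le_pow_left₀ (by positivity) hτ' 2
      rw [_root_.sq_abs] at h1
      calc (786:ℝ)^4 = ((786:ℝ)^2)^2 := by ring
        _ ≤ τ^2 := h1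
    have hsmall : ‖((((η:ℂ)+I)^2+((ζ:ℂ)+I)^2)^3 / (τ:ℂ)^2)‖ ≤ 27/8 := by
      rw [norm_div, norm_pow, norm_pow, Complex.norm_real, Real.norm_eq_abs]
      have h1 : ‖(((η:ℂ)+I)^2+((ζ:ℂ)+I)^2)‖^3 ≤ 786^3 := by
        apply pow_le_pow_left₀ (norm_nonneg _) hw
      have h2 : (786:ℝ)^4 ≤ |τ|^2 := by rw [_root_.sq_abs]; exact hτ4
      calc ‖(((η:ℂ)+I)^2+((ζ:ℂ)+I)^2)‖^3 / |τ|^2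
          ≤ (786:ℝ)^3 / (786:ℝ)^4 := by
            apply div_le_div₀ (by positivity) h1 (by positivity) h2
        _ ≤ 27/8 := by norm_num
    set z := (((η:ℂ)+I)^2+((ζ:ℂ)+I)^2)^3 / (τ:ℂ)^2 with hz
    have htri : (27:ℝ)/4 ≤ ‖(z + 27/4)‖ + ‖z‖ := by
      have := norm_add_le (z + 27/4) (-z)
      simp at this
      calc (27:ℝ)/4 = ‖((27:ℂ)/4)‖ := by
            rw [norm_div]; simp
        _ ≤ _ := by
            have h27 : (27:ℂ)/4 = (z + 27/4) + (-z) := by ring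
            rw [h27]
            simpa using norm_add_le (z + 27/4) (-z)
    linarith
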